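/- Let a > 0 and k ≥ 1, and consider the 2k+1 points {±a·e₁,…,±a·e_k, 0} in ℝ^k, where e₁,…,e_k is the standard basis. Then the Gaussian measure centered at a·e₁ of the Voronoi cell of a·e₁ equals γ_{a·e₁}(Vor(a·e₁)) = ∫_{a/2}^{+∞} (2π)^{−1/2} e^{−(b−a)²/2} (2Φ(b) − 1)^{k−1} db. -/

import Mathlib

open MeasureTheory Real
open scoped InnerProductSpace ENNReal

/-- The Voronoi cell of the point `w j` in the configuration `w`. -/
def Vor {n : ℕ} {ι : Type} (w : ι → EuclideanSpace ℝ (Fin n)) (j : ι) :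
    Set (EuclideanSpace ℝ (Fin n)) :=
  {x | ∀ i, ‖x - w j‖ ≤ ‖x - w i‖}

/-- The Gaussian probability measure on `ℝᵏ` centered at `w`,
with density `(2π)^{−k/2} e^{−‖x−w‖²/2}`. -/
noncomputable def gaussianAt {k : ℕ} (w : EuclideanSpace ℝ (Fin k)) :
    Measure (EuclideanSpace ℝ (Fin k)) :=
  volume.withDensity fun x =>
    ENNReal.ofReal ((2 * Real.pi) ^ (-(k : ℝ) / 2) * Real.exp (-‖x - w‖ ^ 2 / 2))

/-- The standard normal cumulative distribution function. -/
noncomputable def Phi (x : ℝ) : ℝ :=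
  ∫ t in Set.Iic x, (Real.sqrt (2 * Real.pi))⁻¹ * Real.exp (-t ^ 2 / 2)

/-- The configuration `{±a·e₁, …, ±a·e_k, 0}` of `2k+1` points in `ℝᵏ`. -/
noncomputable def steinerConfig (k : ℕ) (a : ℝ) :
    Option (Fin k × Bool) → EuclideanSpace ℝ (Fin k)
  | none => 0
  | some (i, b) => (if b then a else -a) • EuclideanSpace.single i 1

section Helpers

open Set

noncomputable def phiD (t : ℝ) : ℝ := (Real.sqrt (2 * Real.pi))⁻¹ * Real.exp (-t ^ 2 / 2)

lemma phiD_nonneg (t : ℝ) : 0 ≤ phiD t := by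
  unfold phiD; positivity

lemma integrable_phiD : Integrable phiD := by
  have : Integrable (fun t : ℝ => Real.exp (-(1/2) * t ^ 2)) := integrable_exp_neg_mul_sq (by norm_num)
  have h := this.const_mul (Real.sqrt (2 * Real.pi))⁻¹
  refine h.congr (Filter.Eventually.of_forall fun t => by unfold phiD; ring_nf)

lemma integral_phiD : ∫ t, phiD t = 1 := by
  unfold phiD
  rw [MeasureTheory.integral_const_mul]
  have : ∫ t : ℝ, Real.exp (-t ^ 2 / 2) = ∫ t : ℝ, Real.exp (-(1/2) * t ^ 2) := by
    congr 1; ext t; ring_nf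
  rw [this, integral_gaussian]
  rw [inv_mul_eq_one₀ (by positivity)]
  rw [show Real.pi / (1/2) = 2 * Real.pi by ring]

lemma Phi_eq (x : ℝ) : Phi x = ∫ t in Set.Iic x, phiD t := rfl

lemma phiD_neg (t : ℝ) : phiD (-t) = phiD t := by unfold phiD; ring_nf

lemma Phi_neg (b : ℝ) : Phi (-b) = 1 - Phi b := by
  have h1 : Phi (-b) = ∫ t in Set.Ioi b, phiD t := by
    rw [Phi_eq]
    have : (∫ t in Set.Iic (-b), phiD t) = ∫ t in Set.Iic (-b), phiD (-t) := by
      simp only [phiD_neg]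
    rw [this, integral_comp_neg_Iic, neg_neg]
  have h2 : (∫ t in Set.Iic b, phiD t) + ∫ t in Set.Ioi b, phiD t = 1 := by
    rw [← integral_phiD]
    rw [← MeasureTheory.setIntegral_union (Set.Iic_disjoint_Ioi le_rfl) measurableSet_Ioi
      integrable_phiD.integrableOn integrable_phiD.integrableOn]
    rw [Set.Iic_union_Ioi, MeasureTheory.setIntegral_univ]
  rw [h1, ← Phi_eq] at *
  linarith

lemma integral_Icc_phiD {b : ℝ} (hb : 0 ≤ b) : ∫ t in Set.Icc (-b) b, phiD t = 2 * Phi b - 1 := by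
  have h0 : (∫ t in Set.Icc (-b) b, phiD t) = ∫ t in Set.Ioc (-b) b, phiD t :=
    setIntegral_congr_set Ioc_ae_eq_Icc.symm
  rw [h0]
  have hsplit : (∫ t in Set.Iic (-b), phiD t) + ∫ t in Set.Ioc (-b) b, phiD t
      = ∫ t in Set.Iic b, phiD t := by
    rw [← MeasureTheory.setIntegral_union (Set.Iic_disjoint_Ioc le_rfl) measurableSet_Ioc
      integrable_phiD.integrableOn integrable_phiD.integrableOn]
    rw [Set.Iic_union_Ioc_eq_Iic (by linarith)]
  have hneg := Phi_neg b
  rw [Phi_eq] at hneg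
  rw [show Phi b = ∫ t in Set.Iic b, phiD t from rfl] at hneg ⊢
  linarith

lemma Phi_mono : Monotone Phi := by
  intro s t hst
  rw [Phi_eq, Phi_eq]
  refine setIntegral_mono_set integrable_phiD.integrableOn
    (Filter.Eventually.of_forall fun u => phiD_nonneg u) ?_
  exact Filter.Eventually.of_forall (Set.Iic_subset_Iic.2 hst)

lemma Phi_sub_nonneg {b : ℝ} (hb : 0 ≤ b) : 0 ≤ 2 * Phi b - 1 := by
  rw [← integral_Icc_phiD hb]
  exact setIntegral_nonneg measurableSet_Icc fun t _ => phiD_nonneg t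

lemma Phi_sub_le_one {b : ℝ} (hb : 0 ≤ b) : 2 * Phi b - 1 ≤ 1 := by
  rw [← integral_Icc_phiD hb, ← integral_phiD]
  exact setIntegral_le_integral integrable_phiD (Filter.Eventually.of_forall phiD_nonneg)

lemma Phi_measurable : Measurable Phi := Phi_mono.measurable

open scoped ENNReal

lemma lintegral_pi_prod : ∀ (n : ℕ) (f : ℝ → ℝ≥0∞), Measurable f →
    ∫⁻ z : Fin n → ℝ, (∏ i, f (z i)) ∂(Measure.pi fun _ => (volume : Measure ℝ))
      = (∫⁻ t, f t) ^ n := by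
  intro n
  induction n with
  | zero =>
    intro f hf
    simp [MeasureTheory.lintegral_const, Measure.pi_univ]
  | succ n ih =>
    intro f hf
    have mp := (measurePreserving_piFinSuccAbove (fun _ : Fin (n+1) => (volume : Measure ℝ)) 0).symm
    have he := (MeasurableEquiv.piFinSuccAbove (fun _ : Fin (n+1) => ℝ) 0).symm.measurableEmbedding
    rw [← mp.lintegral_comp_emb he]
    have key : ∀ p : ℝ × (Fin n → ℝ),
        (∏ i, f (((MeasurableEquiv.piFinSuccAbove (fun _ : Fin (n+1) => ℝ) 0).symm p) i))
          = f p.1 * ∏ i, f (p.2 i) := by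
      intro p
      have hfun : ((MeasurableEquiv.piFinSuccAbove (fun _ : Fin (n+1) => ℝ) 0).symm p)
          = Fin.cons p.1 p.2 := by
        ext j
        simp [MeasurableEquiv.piFinSuccAbove, Fin.insertNth_zero]
      rw [hfun, Fin.prod_univ_succ]
      simp
    simp_rw [key]
    have hm : Measurable fun z : Fin n → ℝ => ∏ i, f (z i) :=
      Finset.measurable_prod _ fun i _ => hf.comp (measurable_pi_apply i)
    rw [MeasureTheory.lintegral_prod]
    case succ.hf => exact ((hf.comp measurable_fst).mul (hm.comp measurable_snd)).aemeasurable
    have step : ∀ b : ℝ, (∫⁻ z : Fin n → ℝ, f b * ∏ i, f (z i) ∂(Measure.pi fun _ => (volume : Measure ℝ)))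
        = f b * (∫⁻ t, f t) ^ n := by
      intro b
      rw [MeasureTheory.lintegral_const_mul _ hm, ih f hf]
    refine (MeasureTheory.lintegral_congr fun b => step b).trans ?_
    rw [MeasureTheory.lintegral_mul_const _ hf]
    ring

lemma lintegral_pi_box (n : ℕ) (f : ℝ → ℝ≥0∞) (hf : Measurable f) (s : Set ℝ)
    (hs : MeasurableSet s) :
    ∫⁻ z : Fin n → ℝ in Set.univ.pi (fun _ => s), ∏ i, f (z i)
        ∂(Measure.pi fun _ => (volume : Measure ℝ))
      = (∫⁻ t in s, f t) ^ n := by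
  rw [← MeasureTheory.lintegral_indicator (MeasurableSet.univ_pi fun _ => hs)]
  have : ∀ z : Fin n → ℝ, (Set.univ.pi (fun _ => s)).indicator (fun z => ∏ i, f (z i)) z
      = ∏ i, s.indicator f (z i) := by
    intro z
    by_cases hz : z ∈ Set.univ.pi (fun _ => s)
    · rw [Set.indicator_of_mem hz]
      exact Finset.prod_congr rfl fun i _ =>
        (Set.indicator_of_mem (hz i (Set.mem_univ i)) f).symm
    · rw [Set.indicator_of_notMem hz]
      simp only [Set.mem_pi, Set.mem_univ, forall_true_left, not_forall] at hz
      obtain ⟨i, hi⟩ := hz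
      exact (Finset.prod_eq_zero (Finset.mem_univ i) (Set.indicator_of_notMem hi f)).symm
  rw [MeasureTheory.lintegral_congr this, lintegral_pi_prod n _ (hf.indicator hs),
    MeasureTheory.lintegral_indicator hs]

lemma norm_sub_single_sq (k : ℕ) (x : EuclideanSpace ℝ (Fin k)) (c : ℝ) (i : Fin k) :
    ‖x - c • EuclideanSpace.single i (1:ℝ)‖^2 = ‖x‖^2 - 2*(c * x i) + c^2 := by
  rw [norm_sub_sq_real, real_inner_smul_right, EuclideanSpace.inner_single_right,
    norm_smul, EuclideanSpace.norm_single]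
  simp [mul_pow, sq_abs]

lemma norm_le_norm_iff_sq {E : Type*} [NormedAddCommGroup E] (u v : E) :
    ‖u‖ ≤ ‖v‖ ↔ ‖u‖^2 ≤ ‖v‖^2 :=
  ⟨fun h => pow_le_pow_left₀ (norm_nonneg _) h 2,
   fun h => le_of_pow_le_pow_left₀ two_ne_zero (norm_nonneg _) h⟩

lemma vor_desc (n : ℕ) (a : ℝ) (ha : 0 < a) :
    Vor (steinerConfig (n+1) a) (some (0, true)) =
      {x : EuclideanSpace ℝ (Fin (n+1)) | a/2 ≤ x 0 ∧ ∀ i, |x i| ≤ x 0} := by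
  ext x
  have hw : steinerConfig (n+1) a (some (0, true)) = a • EuclideanSpace.single 0 (1:ℝ) := by
    simp [steinerConfig]
  simp only [Vor, Set.mem_setOf_eq]
  constructor
  · intro h
    refine ⟨?_, fun i => ?_⟩
    · have h0 := h none
      rw [hw] at h0
      simp only [steinerConfig, sub_zero] at h0
      rw [norm_le_norm_iff_sq, norm_sub_single_sq] at h0
      nlinarith [h0]
    · have h1 := h (some (i, true))
      have h2 := h (some (i, false))
      rw [hw] at h1 h2
      simp only [steinerConfig, if_pos, if_neg] at h1 h2
      rw [norm_le_norm_iff_sq, norm_sub_single_sq, norm_sub_single_sq] at h1 h2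
      norm_num at h1 h2
      rw [abs_le]
      constructor <;> nlinarith [h1, h2]
  · rintro ⟨h0, habs⟩ (_ | ⟨i, b⟩)
    · rw [hw]
      show ‖x - a • EuclideanSpace.single 0 (1:ℝ)‖ ≤ ‖x - 0‖
      rw [sub_zero, norm_le_norm_iff_sq, norm_sub_single_sq]
      nlinarith [h0]
    · rw [hw]
      have hi := habs i
      rw [abs_le] at hi
      cases b
      · show ‖x - a • EuclideanSpace.single 0 (1:ℝ)‖
            ≤ ‖x - (if false = true then a else -a) • EuclideanSpace.single i (1:ℝ)‖
        rw [if_neg (by simp), norm_le_norm_iff_sq, norm_sub_single_sq, norm_sub_single_sq]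
        nlinarith [hi.1]
      · show ‖x - a • EuclideanSpace.single 0 (1:ℝ)‖
            ≤ ‖x - (if true = true then a else -a) • EuclideanSpace.single i (1:ℝ)‖
        rw [if_pos rfl, norm_le_norm_iff_sq, norm_sub_single_sq, norm_sub_single_sq]
        nlinarith [hi.2]

lemma rpow_helper (k : ℕ) : (2*Real.pi) ^ (-(k:ℝ)/2) = ((Real.sqrt (2*Real.pi))⁻¹)^k := by
  have h2p : (0:ℝ) ≤ 2 * Real.pi := by positivity
  rw [Real.sqrt_eq_rpow, ← Real.rpow_neg h2p, ← Real.rpow_natCast ((2*Real.pi) ^ (-(1/2):ℝ)) k,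
    ← Real.rpow_mul h2p]
  norm_num
  ring_nf

lemma density_prod (n : ℕ) (w : Fin n → ℝ) (y : Fin n → ℝ) :
    ENNReal.ofReal ((2 * Real.pi) ^ (-(n : ℝ) / 2) * Real.exp (-(∑ j, (y j - w j)^2) / 2))
      = ∏ j, ENNReal.ofReal (phiD (y j - w j)) := by
  rw [← ENNReal.ofReal_prod_of_nonneg (fun j _ => by unfold phiD; positivity)]
  congr 1
  unfold phiD
  rw [Finset.prod_mul_distrib, Finset.prod_const, ← Real.exp_sum, rpow_helper,
    Finset.card_univ, Fintype.card_fin]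
  have harg : (-(∑ j, (y j - w j)^2) / 2) = ∑ j, (-(y j - w j)^2 / 2) := by
    rw [neg_div, Finset.sum_div, ← Finset.sum_neg_distrib]
    exact Finset.sum_congr rfl fun j _ => by ring
  rw [harg]

lemma eucl_sub_apply (k : ℕ) (x y : EuclideanSpace ℝ (Fin k)) (j : Fin k) :
    (x - y) j = x j - y j := rfl

lemma eucl_smul_apply (k : ℕ) (c : ℝ) (v : EuclideanSpace ℝ (Fin k)) (j : Fin k) :
    (c • v) j = c * v j := rfl

lemma eucl_norm_sq (k : ℕ) (v : EuclideanSpace ℝ (Fin k)) : ‖v‖^2 = ∑ j, (v j)^2 := by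
  rw [EuclideanSpace.norm_eq, Real.sq_sqrt (by positivity)]
  simp [sq_abs]

lemma measurable_phiD : Measurable phiD := by
  unfold phiD
  fun_prop

lemma key (n : ℕ) (a : ℝ) (ha : 0 < a) :
    (volume.withDensity fun x : EuclideanSpace ℝ (Fin (n+1)) =>
        ENNReal.ofReal ((2 * Real.pi) ^ (-((n+1 : ℕ) : ℝ) / 2)
          * Real.exp (-‖x - a • EuclideanSpace.single 0 (1:ℝ)‖ ^ 2 / 2)))
      {x : EuclideanSpace ℝ (Fin (n+1)) | a/2 ≤ x 0 ∧ ∀ i, |x i| ≤ x 0}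
    = ENNReal.ofReal (∫ b in Set.Ioi (a/2), phiD (b - a) * (2 * Phi b - 1) ^ n) := by
  have h2a : 0 < a / 2 := by linarith
  set e := (MeasurableEquiv.toLp 2 (Fin (n+1) → ℝ)).symm with he
  set S₁ : Set (Fin (n+1) → ℝ) := {y | a/2 ≤ y 0 ∧ ∀ i, |y i| ≤ y 0} with hS₁def
  have hS₁m : MeasurableSet S₁ := by
    have : S₁ = {y : Fin (n+1) → ℝ | a/2 ≤ y 0} ∩ ⋂ i, {y | |y i| ≤ y 0} := by
      ext y; simp [hS₁def, Set.mem_iInter]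
    rw [this]
    exact (measurableSet_le measurable_const (measurable_pi_apply 0)).inter
      (MeasurableSet.iInter fun i => measurableSet_le
        (measurable_pi_apply i).abs (measurable_pi_apply 0))
  set S : Set (EuclideanSpace ℝ (Fin (n+1))) :=
    {x : EuclideanSpace ℝ (Fin (n+1)) | a/2 ≤ x 0 ∧ ∀ i, |x i| ≤ x 0} with hSdef
  have hSeq : S = e ⁻¹' S₁ := rfl
  have hSm : MeasurableSet S := by rw [hSeq]; exact e.measurable hS₁m
  set D : EuclideanSpace ℝ (Fin (n+1)) → ℝ≥0∞ := fun x =>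
    ENNReal.ofReal ((2 * Real.pi) ^ (-((n+1 : ℕ) : ℝ) / 2)
      * Real.exp (-‖x - a • EuclideanSpace.single 0 (1:ℝ)‖ ^ 2 / 2)) with hDdef
  rw [withDensity_apply _ hSm]
  have mpE := (EuclideanSpace.volume_preserving_symm_measurableEquiv_toLp (Fin (n+1))).symm
  have hchg := mpE.setLIntegral_comp_preimage_emb
    (MeasurableEquiv.measurableEmbedding _) D S
  have hpre : (⇑e.symm) ⁻¹' S = S₁ := by
    rw [hSeq]; ext y
    simp only [Set.mem_preimage, MeasurableEquiv.apply_symm_apply]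
  rw [← hchg, hpre]
  -- factor the density
  set wc : Fin (n+1) → ℝ := fun j => if j = 0 then a else 0 with hwc
  set F : (Fin (n+1) → ℝ) → ℝ≥0∞ := fun y => ∏ j, ENNReal.ofReal (phiD (y j - wc j)) with hF
  have hDF : ∀ y : Fin (n+1) → ℝ, D (e.symm y) = F y := by
    intro y
    have hnorm : ‖e.symm y - a • EuclideanSpace.single 0 (1:ℝ)‖ ^ 2
        = ∑ j, (y j - wc j) ^ 2 := by
      rw [eucl_norm_sq]
      refine Finset.sum_congr rfl fun j _ => ?_
      congr 1
      rw [eucl_sub_apply, eucl_smul_apply, EuclideanSpace.single_apply, hwc]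
      have hy : (e.symm y) j = y j := rfl
      rw [hy]
      by_cases hj : j = 0 <;> simp [hj]
    rw [hDdef]
    simp only
    rw [hnorm, density_prod (n+1) wc y]
  rw [setLIntegral_congr_fun hS₁m (fun y _ => hDF y)]
  -- split off coordinate 0
  have mp2 := (volume_preserving_piFinSuccAbove (fun _ : Fin (n+1) => ℝ) 0).symm
  set e2 := MeasurableEquiv.piFinSuccAbove (fun _ : Fin (n+1) => ℝ) 0 with he2
  have hchg2 := mp2.setLIntegral_comp_preimage_emb
    (MeasurableEquiv.measurableEmbedding _) F S₁
  rw [← hchg2]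
  have hcons : ∀ p : ℝ × (Fin n → ℝ), e2.symm p = Fin.cons p.1 p.2 := by
    intro p
    ext j
    simp [he2, MeasurableEquiv.piFinSuccAbove, Fin.insertNth_zero]
  set T : Set (ℝ × (Fin n → ℝ)) := {p | a/2 ≤ p.1 ∧ ∀ i, |p.2 i| ≤ p.1} with hT
  have hTm : MeasurableSet T := by
    have : T = {p : ℝ × (Fin n → ℝ) | a/2 ≤ p.1} ∩ ⋂ i, {p | |p.2 i| ≤ p.1} := by
      ext p; simp [hT, Set.mem_iInter]
    rw [this]
    refine MeasurableSet.inter ?_ (MeasurableSet.iInter fun i => ?_) <;>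
      apply measurableSet_le <;> fun_prop
  have hpre2 : (⇑e2.symm) ⁻¹' S₁ = T := by
    ext p
    rw [Set.mem_preimage, hcons p]
    simp only [hS₁def, hT, Set.mem_setOf_eq, Fin.cons_zero]
    constructor
    · rintro ⟨h1, h2⟩
      exact ⟨h1, fun i => by simpa using h2 i.succ⟩
    · rintro ⟨h1, h2⟩
      refine ⟨h1, fun j => ?_⟩
      refine Fin.cases ?_ ?_ j
      · simp only [Fin.cons_zero]
        rw [abs_of_nonneg (le_trans h2a.le h1)]
      · intro i; simpa using h2 i
  rw [hpre2]
  set G : ℝ × (Fin n → ℝ) → ℝ≥0∞ := fun p =>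
    ENNReal.ofReal (phiD (p.1 - a)) * ∏ i, ENNReal.ofReal (phiD (p.2 i)) with hG
  have hFG : ∀ p : ℝ × (Fin n → ℝ), F (e2.symm p) = G p := by
    intro p
    rw [hcons p, hF]
    simp only [Fin.prod_univ_succ, Fin.cons_zero, Fin.cons_succ, hwc, hG]
    simp [Fin.succ_ne_zero, sub_zero]
  rw [setLIntegral_congr_fun hTm (fun p _ => hFG p)]
  have hGm : Measurable G := by
    rw [hG]
    refine Measurable.mul ?_ ?_
    · exact ((measurable_phiD.comp (measurable_fst.sub measurable_const)).ennreal_ofReal)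
    · exact Finset.measurable_prod _ fun i _ =>
        (measurable_phiD.comp ((measurable_pi_apply i).comp measurable_snd)).ennreal_ofReal
  rw [← lintegral_indicator hTm, MeasureTheory.Measure.volume_eq_prod,
    MeasureTheory.lintegral_prod _ (hGm.indicator hTm).aemeasurable]
  -- inner integral
  have hinner : ∀ b : ℝ, (∫⁻ z : Fin n → ℝ, T.indicator G (b, z))
      = (Set.Ici (a/2)).indicator
          (fun b => ENNReal.ofReal (phiD (b - a)) * (ENNReal.ofReal (2 * Phi b - 1)) ^ n) b := by
    intro b
    by_cases hb : a/2 ≤ b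
    · have hb0 : 0 ≤ b := le_trans h2a.le hb
      rw [Set.indicator_of_mem (Set.mem_Ici.2 hb)]
      have hptwise : ∀ z : Fin n → ℝ, T.indicator G (b, z)
          = (Set.univ.pi fun _ : Fin n => Set.Icc (-b) b).indicator
              (fun z => ENNReal.ofReal (phiD (b - a)) * ∏ i, ENNReal.ofReal (phiD (z i))) z := by
        intro z
        by_cases hz : z ∈ Set.univ.pi fun _ : Fin n => Set.Icc (-b) b
        · rw [Set.indicator_of_mem hz, Set.indicator_of_mem]
          refine ⟨hb, fun i => ?_⟩
          have := hz i (Set.mem_univ i)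
          rw [Set.mem_Icc] at this
          exact abs_le.2 this
        · rw [Set.indicator_of_notMem hz, Set.indicator_of_notMem]
          intro hmem
          refine hz fun i _ => ?_
          rw [Set.mem_Icc, ← abs_le]
          exact hmem.2 i
      rw [lintegral_congr hptwise, lintegral_indicator
        (MeasurableSet.univ_pi fun _ => measurableSet_Icc)]
      have hprod : Measurable fun z : Fin n → ℝ => ∏ i, ENNReal.ofReal (phiD (z i)) :=
        Finset.measurable_prod _ fun i _ =>
          ((measurable_phiD.comp (measurable_pi_apply i)).ennreal_ofReal)
      rw [MeasureTheory.lintegral_const_mul _ hprod]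
      congr 1
      rw [MeasureTheory.volume_pi, lintegral_pi_box n _
        (measurable_phiD.ennreal_ofReal) _ measurableSet_Icc]
      congr 1
      rw [← MeasureTheory.ofReal_integral_eq_lintegral_ofReal
        integrable_phiD.integrableOn
        (Filter.Eventually.of_forall fun t => phiD_nonneg t)]
      rw [integral_Icc_phiD hb0]
    · rw [Set.indicator_of_notMem (by simpa [Set.mem_Ici] using hb)]
      have : ∀ z : Fin n → ℝ, T.indicator G (b, z) = 0 := by
        intro z
        rw [Set.indicator_of_notMem]
        intro hmem
        exact hb hmem.1
      rw [lintegral_congr this, lintegral_zero]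
  rw [lintegral_congr hinner, lintegral_indicator measurableSet_Ici,
    ← MeasureTheory.Measure.restrict_congr_set Ioi_ae_eq_Ici]
  -- convert to a real integral
  have hnn : ∀ b ∈ Set.Ioi (a/2), ENNReal.ofReal (phiD (b - a)) * (ENNReal.ofReal (2 * Phi b - 1)) ^ n
      = ENNReal.ofReal (phiD (b - a) * (2 * Phi b - 1) ^ n) := by
    intro b hb
    have hb0 : (0:ℝ) ≤ b := le_of_lt (lt_trans h2a hb)
    rw [ENNReal.ofReal_mul (phiD_nonneg _), ENNReal.ofReal_pow (Phi_sub_nonneg hb0)]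
  rw [setLIntegral_congr_fun measurableSet_Ioi hnn]
  -- integrability
  have hmeas : AEStronglyMeasurable (fun b => phiD (b - a) * (2 * Phi b - 1) ^ n)
      (volume.restrict (Set.Ioi (a/2))) := by
    refine Measurable.aestronglyMeasurable ?_
    exact (measurable_phiD.comp (measurable_id.sub measurable_const)).mul
      (((Phi_measurable.const_mul 2).sub measurable_const).pow measurable_const)
  have hint : IntegrableOn (fun b => phiD (b - a) * (2 * Phi b - 1) ^ n) (Set.Ioi (a/2)) := by
    refine Integrable.mono' ((integrable_phiD.comp_sub_right a).integrableOn) hmeas ?_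
    rw [MeasureTheory.ae_restrict_iff' measurableSet_Ioi]
    refine Filter.Eventually.of_forall fun b hb => ?_
    have hb0 : (0:ℝ) ≤ b := le_of_lt (lt_trans h2a hb)
    have h1 : 0 ≤ 2 * Phi b - 1 := Phi_sub_nonneg hb0
    have h2 : 2 * Phi b - 1 ≤ 1 := Phi_sub_le_one hb0
    rw [Real.norm_eq_abs, abs_of_nonneg (mul_nonneg (phiD_nonneg _) (pow_nonneg h1 n))]
    calc phiD (b - a) * (2 * Phi b - 1) ^ n ≤ phiD (b - a) * 1 ^ n := by
          exact mul_le_mul_of_nonneg_left (pow_le_pow_left₀ h1 h2 n) (phiD_nonneg _)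
      _ = phiD (b - a) := by rw [one_pow, mul_one]
  have hfnn : 0 ≤ᵐ[volume.restrict (Set.Ioi (a/2))]
      fun b => phiD (b - a) * (2 * Phi b - 1) ^ n := by
    filter_upwards [MeasureTheory.self_mem_ae_restrict measurableSet_Ioi] with b hb
    have hb0 : (0:ℝ) ≤ b := le_of_lt (lt_trans h2a hb)
    exact mul_nonneg (phiD_nonneg _) (pow_nonneg (Phi_sub_nonneg hb0) n)
  rw [← MeasureTheory.ofReal_integral_eq_lintegral_ofReal hint hfnn]

end Helpers

/-- For the configuration `{±a·e₁, …, ±a·e_k, 0}`, the Gaussian measure centered at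
`a·e₁` of the Voronoi cell of `a·e₁` equals
`∫_{a/2}^∞ (2π)^{−1/2} e^{−(b−a)²/2} (2Φ(b)−1)^{k−1} db`. -/
theorem stmt16 (k : ℕ) (hk : 1 ≤ k) (a : ℝ) (ha : 0 < a) :
    gaussianAt (steinerConfig k a (some (⟨0, by omega⟩, true)))
        (Vor (steinerConfig k a) (some (⟨0, by omega⟩, true))) =
      ENNReal.ofReal (∫ b in Set.Ioi (a / 2),
        (Real.sqrt (2 * Real.pi))⁻¹ * Real.exp (-(b - a) ^ 2 / 2) *
          (2 * Phi b - 1) ^ (k - 1)) := by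
  obtain ⟨n, rfl⟩ : ∃ n, k = n + 1 := ⟨k - 1, by omega⟩
  have hj0 : (⟨0, by omega⟩ : Fin (n+1)) = 0 := rfl
  rw [hj0]
  have hw : steinerConfig (n+1) a (some (0, true)) = a • EuclideanSpace.single 0 (1:ℝ) := by
    simp [steinerConfig]
  rw [vor_desc n a ha, gaussianAt, hw]
  have := key n a ha
  rw [this]
  congr 1
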